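/- Let q ≥ 2 and let Γ be a finite weak generalized hexagon of order (q,q) (for example the split Cayley hexagon H(q)). Let S be a set of q^3+1 mutually opposite lines of Γ (any two distinct lines of S are at distance 6 in the incidence graph). Then every line of Γ either belongs to S or meets some line of S; equivalently, every line of Γ is at distance at most 2 in the incidence graph from some line of S. -/

import Mathlib

/-- The incidence graph of a point-line geometry. -/
def IncidenceGraph {P L : Type*} (I : P → L → Prop) : SimpleGraph (P ⊕ L) where
  Adj x y :=
    (∃ p l, x = Sum.inl p ∧ y = Sum.inr l ∧ I p l) ∨
    (∃ p l, x = Sum.inr l ∧ y = Sum.inl p ∧ I p l)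
  symm := by
    constructor
    rintro x y (⟨p, l, hx, hy, h⟩ | ⟨p, l, hx, hy, h⟩)
    · exact Or.inr ⟨p, l, hy, hx, h⟩
    · exact Or.inl ⟨p, l, hy, hx, h⟩
  loopless := by
    constructor
    rintro x (⟨p, l, hx, hy, h⟩ | ⟨p, l, hx, hy, h⟩) <;> subst hx <;> simp_all

/-- A finite weak generalized hexagon: the incidence graph is connected, has girth
exactly 12, and has all pairwise distances at most 6. -/
def IsWeakGenHexagon {P L : Type*} (I : P → L → Prop) : Prop :=
  (IncidenceGraph I).Connected ∧ (IncidenceGraph I).girth = 12 ∧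
    ∀ x y, (IncidenceGraph I).dist x y ≤ 6

/-- The geometry has order (s,t): every line is incident with exactly s+1 points
and every point with exactly t+1 lines. -/
def HasOrder {P L : Type*} (I : P → L → Prop) (s t : ℕ) : Prop :=
  (∀ l, {p | I p l}.ncard = s + 1) ∧ (∀ p, {l | I p l}.ncard = t + 1)


open Sum Set

section Helpers

variable {P L : Type} {I : P → L → Prop}

lemma adj_inr {a : L} {x : P ⊕ L} :
    (IncidenceGraph I).Adj (Sum.inr a) x ↔ ∃ p, x = Sum.inl p ∧ I p a := by
  constructor
  · rintro (⟨p, b, h1, h2, h3⟩ | ⟨p, b, h1, h2, h3⟩)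
    · exact absurd h1 (by simp)
    · obtain rfl : a = b := Sum.inr.inj h1
      exact ⟨p, h2, h3⟩
  · rintro ⟨p, rfl, h⟩
    exact Or.inr ⟨p, a, rfl, rfl, h⟩

lemma adj_inl {p : P} {x : P ⊕ L} :
    (IncidenceGraph I).Adj (Sum.inl p) x ↔ ∃ a, x = Sum.inr a ∧ I p a := by
  constructor
  · rintro (⟨p', b, h1, h2, h3⟩ | ⟨p', b, h1, h2, h3⟩)
    · obtain rfl : p = p' := Sum.inl.inj h1
      exact ⟨b, h2, h3⟩
    · exact absurd h1 (by simp)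
  · rintro ⟨a, rfl, h⟩
    exact Or.inl ⟨p, a, rfl, rfl, h⟩

lemma adj_of_inc {p : P} {a : L} (h : I p a) :
    (IncidenceGraph I).Adj (Sum.inl p) (Sum.inr a) :=
  Or.inl ⟨p, a, rfl, rfl, h⟩

lemma walk_parity {x y : P ⊕ L} (w : (IncidenceGraph I).Walk x y) :
    Even w.length ↔ (x.isRight = y.isRight) := by
  induction w with
  | nil => simp
  | @cons x z y h w ih =>
    have hxz : x.isRight ≠ z.isRight := by
      rcases h with ⟨p, a, hx, hz, _⟩ | ⟨p, a, hx, hz, _⟩ <;> subst hx <;> subst hz <;> simp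
    rw [SimpleGraph.Walk.length_cons, Nat.even_add_one, ih]
    revert hxz
    cases hx : x.isRight <;> cases hy : y.isRight <;> cases hz : z.isRight <;> simp_all

end Helpers

section Counting

variable {A B : Type} [Fintype A] [Fintype B]

lemma aux_ub (s : Set A) (t : A → Set B) (k : ℕ) :
    (∀ a ∈ s, (t a).ncard ≤ k) → (⋃ a ∈ s, t a).ncard ≤ s.ncard * k := by
  refine Set.Finite.induction_on (motive := fun s _ =>
    (∀ a ∈ s, (t a).ncard ≤ k) → (⋃ a ∈ s, t a).ncard ≤ s.ncard * k) s (Set.toFinite s) ?_ ?_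
  · intro _; simp
  · intro a s ha hs ih h
    rw [Set.biUnion_insert, Set.ncard_insert_of_notMem ha hs]
    calc (t a ∪ ⋃ x ∈ s, t x).ncard ≤ (t a).ncard + (⋃ x ∈ s, t x).ncard :=
          Set.ncard_union_le _ _
      _ ≤ k + s.ncard * k := by
          exact Nat.add_le_add (h a (Set.mem_insert _ _)) (ih fun b hb => h b (Set.mem_insert_of_mem _ hb))
      _ = (s.ncard + 1) * k := by ring

lemma aux_lb (s : Set A) (t : A → Set B) (k : ℕ) :
    (∀ a ∈ s, k ≤ (t a).ncard) →
    (∀ a ∈ s, ∀ b ∈ s, a ≠ b → ∀ x, x ∈ t a → x ∈ t b → False) →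
    s.ncard * k ≤ (⋃ a ∈ s, t a).ncard := by
  refine Set.Finite.induction_on (motive := fun s _ =>
    (∀ a ∈ s, k ≤ (t a).ncard) →
    (∀ a ∈ s, ∀ b ∈ s, a ≠ b → ∀ x, x ∈ t a → x ∈ t b → False) →
    s.ncard * k ≤ (⋃ a ∈ s, t a).ncard) s (Set.toFinite s) ?_ ?_
  · intro _ _; simp
  · intro a s ha hs ih h hd
    rw [Set.biUnion_insert, Set.ncard_insert_of_notMem ha hs]
    have hdisj : Disjoint (t a) (⋃ x ∈ s, t x) := by
      rw [Set.disjoint_left]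
      rintro x hxa hxu
      simp only [Set.mem_iUnion] at hxu
      obtain ⟨b, hb, hxb⟩ := hxu
      exact hd a (Set.mem_insert _ _) b (Set.mem_insert_of_mem _ hb)
        (fun hab => ha (hab ▸ hb)) x hxa hxb
    rw [Set.ncard_union_eq hdisj (Set.toFinite _) (Set.toFinite _)]
    have h1 : k ≤ (t a).ncard := h a (Set.mem_insert _ _)
    have h2 : s.ncard * k ≤ (⋃ x ∈ s, t x).ncard :=
      ih (fun b hb => h b (Set.mem_insert_of_mem _ hb))
        (fun b hb c hc => hd b (Set.mem_insert_of_mem _ hb) c (Set.mem_insert_of_mem _ hc))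
    calc (s.ncard + 1) * k = k + s.ncard * k := by ring
      _ ≤ (t a).ncard + (⋃ x ∈ s, t x).ncard := Nat.add_le_add h1 h2

end Counting

section NoFourCycle

variable {P L : Type} {I : P → L → Prop}

lemma girth_le_of_cycle {x : P ⊕ L} (hg : (IncidenceGraph I).girth = 12)
    (c : (IncidenceGraph I).Walk x x) (hc : c.IsCycle) : 12 ≤ c.length := by
  have hegirth : (IncidenceGraph I).egirth = 12 := by
    have h1 := hg
    rw [SimpleGraph.girth] at h1
    have hne : (IncidenceGraph I).egirth ≠ ⊤ := by
      intro h; rw [h] at h1; simp at h1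
    rw [← ENat.coe_toNat hne, h1]; rfl
  have h := (SimpleGraph.le_egirth.mp (le_of_eq hegirth.symm)) _ c hc
  exact_mod_cast h

lemma no4cycle (hg : (IncidenceGraph I).girth = 12)
    {p p' : P} {n m : L} (hpp : p ≠ p') (hnm : n ≠ m)
    (h1 : I p n) (h2 : I p' n) (h3 : I p m) (h4 : I p' m) : False := by
  have hcyc : (SimpleGraph.Walk.cons (adj_of_inc h1) (.cons (adj_inr.mpr ⟨p', rfl, h2⟩)
      (.cons (adj_of_inc h4) (.cons (adj_inr.mpr ⟨p, rfl, h3⟩) .nil)))).IsCycle := by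
    rw [SimpleGraph.Walk.isCycle_def, SimpleGraph.Walk.isTrail_def]
    refine ⟨?_, by simp, ?_⟩
    · simp [hpp, hnm, hpp.symm, hnm.symm, Sym2.eq, Sym2.rel_iff']
    · simp [hpp, hnm, hpp.symm, hnm.symm]
  have := girth_le_of_cycle hg _ hcyc
  simp at this

end NoFourCycle

section Cover

variable {P L : Type} (I : P → L → Prop)

/-- Lines meeting `l` (other than `l`). -/
def A2set (l : L) : Set L := ⋃ p ∈ {p | I p l}, ({n | I p n} \ {l})

/-- Lines at distance (at most) 4 from `l`. -/
def A4set (l : L) : Set L :=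
  ⋃ n ∈ A2set I l, ⋃ p' ∈ ({p | I p n} \ {p | I p l}), ({m | I p' m} \ {n})

/-- Lines reachable by a 5-step walk from `p₀` not starting with `l`. -/
def A6set (l : L) (p₀ : P) : Set L :=
  ⋃ n ∈ ({n | I p₀ n} \ {l}), ⋃ p₁ ∈ ({p | I p n} \ {p₀}),
    ⋃ k ∈ ({k | I p₁ k} \ {n}), ⋃ p₂ ∈ ({p | I p k} \ {p₁}), ({m | I p₂ m} \ {k})

variable {I}

lemma cover_lemma (hconn : (IncidenceGraph I).Connected)
    (hdiam : ∀ x y, (IncidenceGraph I).dist x y ≤ 6)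
    (l : L) (p₀ : P) (hp₀ : I p₀ l) (m : L) :
    m = l ∨ m ∈ A2set I l ∨ m ∈ A4set I l ∨ m ∈ A6set I l p₀ := by
  have hreach : (IncidenceGraph I).Reachable (Sum.inr l) (Sum.inr m) :=
    hconn.preconnected _ _
  set d := (IncidenceGraph I).dist (Sum.inr l) (Sum.inr m) with hd
  have hd6 : d ≤ 6 := hdiam _ _
  have heven : Even d := by
    obtain ⟨w, hw⟩ := hreach.exists_walk_length_eq_dist
    rw [← hd] at hw
    rw [← hw, walk_parity w]; rfl
  have hcases : d = 0 ∨ d = 2 ∨ d = 4 ∨ d = 6 := by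
    obtain ⟨r, hr⟩ := heven; omega
  rcases hcases with h0 | h2 | h4 | h6
  · left
    exact (Sum.inr.inj (hreach.dist_eq_zero_iff.mp h0)).symm
  · -- distance 2
    right; left
    have hml : m ≠ l := by
      intro h; subst h
      have h0 : (IncidenceGraph I).dist (Sum.inr m) (Sum.inr m) = 0 :=
        (hreach.dist_eq_zero_iff).mpr rfl
      rw [hd] at h2; omega
    obtain ⟨w, hwp, hwlen⟩ := hreach.exists_path_of_dist
    rw [← hd, h2] at hwlen
    cases w with
    | nil => simp at hwlen
    | cons h1 w1 =>
      obtain ⟨p, rfl, hpl⟩ := adj_inr.mp h1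
      cases w1 with
      | cons h2' w2 =>
        obtain ⟨a, rfl, hpa⟩ := adj_inl.mp h2'
        cases w2 with
        | nil =>
          simp only [A2set, Set.mem_iUnion, Set.mem_diff, Set.mem_singleton_iff,
            Set.mem_setOf_eq, exists_prop]
          exact ⟨p, hpl, hpa, hml⟩
        | cons h3' w3 => simp at hwlen
  · -- distance 4
    right; right; left
    obtain ⟨w, hwp, hwlen⟩ := hreach.exists_path_of_dist
    rw [← hd, h4] at hwlen
    cases w with
    | nil => simp at hwlen
    | cons h1 w1 =>
      obtain ⟨p, rfl, hpl⟩ := adj_inr.mp h1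
      cases w1 with
      | cons h2' w2 =>
        obtain ⟨n, rfl, hpn⟩ := adj_inl.mp h2'
        cases w2 with
        | nil => simp at hwlen
        | cons h3' w3 =>
          obtain ⟨p', rfl, hp'n⟩ := adj_inr.mp h3'
          cases w3 with
          | cons h4' w4 =>
            obtain ⟨a, rfl, hp'a⟩ := adj_inl.mp h4'
            cases w4 with
            | nil =>
              simp [SimpleGraph.Walk.isPath_def] at hwp
              have hnl : n ≠ l := by
                intro h; subst h; simp at hwp
              have hmn : m ≠ n := by
                intro h; subst h; simp at hwp
              have hp'l : ¬ I p' l := by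
                intro hp'l
                have hw2 : (IncidenceGraph I).dist (Sum.inr l) (Sum.inr m) ≤ 2 := by
                  have := SimpleGraph.dist_le
                    (SimpleGraph.Walk.cons (adj_inr.mpr ⟨p', rfl, hp'l⟩)
                      (SimpleGraph.Walk.cons (adj_of_inc hp'a) SimpleGraph.Walk.nil))
                  simpa using this
                rw [← hd] at hw2; omega
              simp only [A4set, A2set, Set.mem_iUnion, Set.mem_diff, Set.mem_singleton_iff,
                Set.mem_setOf_eq, exists_prop]
              exact ⟨n, ⟨p, hpl, hpn, hnl⟩, p', ⟨hp'n, hp'l⟩, hp'a, hmn⟩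
            | cons h5' w5 => simp at hwlen
  · -- distance 6
    right; right; right
    have hreach' : (IncidenceGraph I).Reachable (Sum.inl p₀) (Sum.inr m) :=
      hconn.preconnected _ _
    set d' := (IncidenceGraph I).dist (Sum.inl p₀) (Sum.inr m) with hd'
    have hd'6 : d' ≤ 6 := hdiam _ _
    have hodd : ¬ Even d' := by
      obtain ⟨w, hw⟩ := hreach'.exists_walk_length_eq_dist
      rw [← hd'] at hw
      rw [← hw, walk_parity w]; simp
    have hlp0 : (IncidenceGraph I).dist (Sum.inr l) (Sum.inl p₀) ≤ 1 := by
      have := SimpleGraph.dist_le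
        (SimpleGraph.Walk.cons (adj_inr.mpr ⟨p₀, rfl, hp₀⟩) SimpleGraph.Walk.nil)
      simpa using this
    have htri : d ≤ (IncidenceGraph I).dist (Sum.inr l) (Sum.inl p₀) + d' :=
      hconn.dist_triangle
    have hd'5 : d' = 5 := by
      rcases Nat.even_or_odd d' with he | ⟨r, hr⟩
      · exact absurd he hodd
      · omega
    obtain ⟨w, hwp, hwlen⟩ := hreach'.exists_path_of_dist
    rw [← hd', hd'5] at hwlen
    cases w with
    | cons h1 w1 =>
      obtain ⟨n, rfl, hp0n⟩ := adj_inl.mp h1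
      cases w1 with
      | nil => simp at hwlen
      | cons h2' w2 =>
        obtain ⟨p₁, rfl, hp1n⟩ := adj_inr.mp h2'
        cases w2 with
        | cons h3' w3 =>
          obtain ⟨k, rfl, hp1k⟩ := adj_inl.mp h3'
          cases w3 with
          | nil => simp at hwlen
          | cons h4' w4 =>
            obtain ⟨p₂, rfl, hp2k⟩ := adj_inr.mp h4'
            cases w4 with
            | cons h5' w5 =>
              obtain ⟨a, rfl, hp2a⟩ := adj_inl.mp h5'
              cases w5 with
              | nil =>
                simp [SimpleGraph.Walk.isPath_def] at hwp
                have hp1p0 : p₁ ≠ p₀ := by intro h; subst h; simp at hwp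
                have hkn : k ≠ n := by intro h; subst h; simp at hwp
                have hp2p1 : p₂ ≠ p₁ := by intro h; subst h; simp at hwp
                have hak : m ≠ k := by intro h; subst h; simp at hwp
                have hnl : n ≠ l := by
                  intro h; subst h
                  have hw4 : (IncidenceGraph I).dist (Sum.inr n) (Sum.inr m) ≤ 4 := by
                    have := SimpleGraph.dist_le
                      (SimpleGraph.Walk.cons (adj_inr.mpr ⟨p₁, rfl, hp1n⟩)
                        (SimpleGraph.Walk.cons (adj_of_inc hp1k)
                          (SimpleGraph.Walk.cons (adj_inr.mpr ⟨p₂, rfl, hp2k⟩)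
                            (SimpleGraph.Walk.cons (adj_of_inc hp2a) SimpleGraph.Walk.nil))))
                    simpa using this
                  rw [← hd] at hw4; omega
                simp only [A6set, Set.mem_iUnion, Set.mem_diff, Set.mem_singleton_iff,
                  Set.mem_setOf_eq, exists_prop]
                exact ⟨n, ⟨hp0n, hnl⟩, p₁, ⟨hp1n, hp1p0⟩, k, ⟨hp1k, hkn⟩, p₂, ⟨hp2k, hp2p1⟩,
                  hp2a, hak⟩
              | cons h6' w6 => simp at hwlen

end Cover

section SizeBounds

variable {P L : Type} [Fintype P] [Fintype L] {I : P → L → Prop} {q : ℕ}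

lemma lns_diff_ncard (hlns : ∀ p : P, {l : L | I p l}.ncard = q + 1)
    {p : P} {a : L} (h : I p a) : ({n | I p n} \ {a}).ncard = q := by
  rw [Set.ncard_diff_singleton_of_mem (show a ∈ {n | I p n} from h), hlns p]; omega

lemma pts_diff_ncard (hpts : ∀ l : L, {p : P | I p l}.ncard = q + 1)
    {p : P} {a : L} (h : I p a) : ({x | I x a} \ {p}).ncard = q := by
  rw [Set.ncard_diff_singleton_of_mem (show p ∈ {x | I x a} from h), hpts a]; omega

end SizeBounds

/-- In a finite weak generalized hexagon of order (q,q) with q ≥ 2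
(e.g. the split Cayley hexagon H(q)), given a set S of q³+1 mutually opposite
lines, every line of the hexagon either belongs to S or meets some line of S. -/
theorem spread_blocks_lines
    {P L : Type} [Fintype P] [Fintype L] (I : P → L → Prop) (q : ℕ) (hq : 2 ≤ q)
    (hΓ : IsWeakGenHexagon I) (hord : HasOrder I q q)
    (S : Set L) (hcard : S.ncard = q ^ 3 + 1)
    (hopp : ∀ l ∈ S, ∀ m ∈ S, l ≠ m →
      (IncidenceGraph I).dist (Sum.inr l) (Sum.inr m) = 6) :
    ∀ l : L, l ∈ S ∨ ∃ m ∈ S, m ≠ l ∧ ∃ p : P, I p l ∧ I p m := by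
  obtain ⟨hconn, hgirth, hdiam⟩ := hΓ
  obtain ⟨hpts, hlns⟩ := hord
  intro l
  -- pick a point on l
  have hptsl : {p : P | I p l}.ncard = q + 1 := hpts l
  have hne : {p : P | I p l}.Nonempty := by
    apply Set.nonempty_of_ncard_ne_zero; rw [hptsl]; omega
  obtain ⟨p₀, hp₀⟩ := hne
  -- upper bound on the number of lines
  have hA2 : (A2set I l).ncard ≤ (q + 1) * q := by
    have := aux_ub {p : P | I p l} (fun p => {n | I p n} \ {l}) q
      (fun p hp => le_of_eq (lns_diff_ncard hlns hp))
    rw [hptsl] at this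
    exact this
  have hA4 : (A4set I l).ncard ≤ ((q + 1) * q) * (q * q) := by
    have hinner : ∀ n ∈ A2set I l,
        (⋃ p' ∈ ({p : P | I p n} \ {p | I p l}), ({m | I p' m} \ {n})).ncard ≤ q * q := by
      intro n hn
      simp only [A2set, Set.mem_iUnion, Set.mem_diff, Set.mem_singleton_iff,
        Set.mem_setOf_eq, exists_prop] at hn
      obtain ⟨p, hpl, hpn, hnl⟩ := hn
      have hfib : ∀ p' ∈ ({x : P | I x n} \ {x | I x l}), ({m | I p' m} \ {n}).ncard ≤ q :=
        fun p' hp' => le_of_eq (lns_diff_ncard hlns hp'.1)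
      have h2 := aux_ub ({x : P | I x n} \ {x | I x l}) (fun p' => {m | I p' m} \ {n}) q hfib
      refine h2.trans (Nat.mul_le_mul_right _ ?_)
      have hsub : ({x : P | I x n} \ {x | I x l}) ⊆ ({x | I x n} \ {p}) := by
        intro x hx
        exact ⟨hx.1, fun h => hx.2 (by simp at h; rw [h]; exact hpl)⟩
      calc ({x : P | I x n} \ {x | I x l}).ncard ≤ ({x | I x n} \ {p}).ncard :=
            Set.ncard_le_ncard hsub (Set.toFinite _)
        _ = q := pts_diff_ncard hpts hpn
    have h1 := aux_ub (A2set I l)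
      (fun n => ⋃ p' ∈ ({p : P | I p n} \ {p | I p l}), ({m | I p' m} \ {n})) (q * q) hinner
    exact h1.trans (Nat.mul_le_mul_right _ hA2)
  have hA6 : (A6set I l p₀).ncard ≤ q * (q * (q * (q * q))) := by
    have h1 : ∀ n ∈ ({n : L | I p₀ n} \ {l}),
        (⋃ p₁ ∈ ({p : P | I p n} \ {p₀}), ⋃ k ∈ ({k : L | I p₁ k} \ {n}),
          ⋃ p₂ ∈ ({p : P | I p k} \ {p₁}), ({m | I p₂ m} \ {k})).ncard
          ≤ q * (q * (q * q)) := by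
      intro n hn
      have h2 : ∀ p₁ ∈ ({x : P | I x n} \ {p₀}),
          (⋃ k ∈ ({k : L | I p₁ k} \ {n}),
            ⋃ p₂ ∈ ({p : P | I p k} \ {p₁}), ({m | I p₂ m} \ {k})).ncard ≤ q * (q * q) := by
        intro p₁ hp₁
        have h3 : ∀ k ∈ ({k : L | I p₁ k} \ {n}),
            (⋃ p₂ ∈ ({p : P | I p k} \ {p₁}), ({m | I p₂ m} \ {k})).ncard ≤ q * q := by
          intro k hk
          have h4 : ∀ p₂ ∈ ({x : P | I x k} \ {p₁}), ({m | I p₂ m} \ {k}).ncard ≤ q :=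
            fun p₂ hp₂ => le_of_eq (lns_diff_ncard hlns hp₂.1)
          have := aux_ub ({x : P | I x k} \ {p₁}) _ q h4
          refine this.trans ?_
          rw [pts_diff_ncard hpts hk.1]
        have := aux_ub ({k : L | I p₁ k} \ {n}) _ (q * q) h3
        refine this.trans ?_
        rw [lns_diff_ncard hlns hp₁.1]
      have := aux_ub ({x : P | I x n} \ {p₀}) _ (q * (q * q)) h2
      refine this.trans ?_
      rw [pts_diff_ncard hpts hn.1]
    have := aux_ub ({n : L | I p₀ n} \ {l}) _ (q * (q * (q * q))) h1
    refine this.trans ?_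
    rw [lns_diff_ncard hlns hp₀]
  have hcover : (Set.univ : Set L) ⊆ {l} ∪ (A2set I l ∪ (A4set I l ∪ A6set I l p₀)) := by
    intro m _
    rcases cover_lemma hconn hdiam l p₀ hp₀ m with h | h | h | h
    · exact Or.inl (by simp [h])
    · exact Or.inr (Or.inl h)
    · exact Or.inr (Or.inr (Or.inl h))
    · exact Or.inr (Or.inr (Or.inr h))
  have hUB : (Set.univ : Set L).ncard ≤
      1 + ((q + 1) * q + (((q + 1) * q) * (q * q) + q * (q * (q * (q * q))))) := by
    calc (Set.univ : Set L).ncard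
        ≤ ({l} ∪ (A2set I l ∪ (A4set I l ∪ A6set I l p₀))).ncard :=
          Set.ncard_le_ncard hcover (Set.toFinite _)
      _ ≤ ({l} : Set L).ncard + (A2set I l ∪ (A4set I l ∪ A6set I l p₀)).ncard :=
          Set.ncard_union_le _ _
      _ ≤ ({l} : Set L).ncard + ((A2set I l).ncard + (A4set I l ∪ A6set I l p₀).ncard) :=
          Nat.add_le_add_left (Set.ncard_union_le _ _) _
      _ ≤ ({l} : Set L).ncard + ((A2set I l).ncard + ((A4set I l).ncard + (A6set I l p₀).ncard)) :=
          Nat.add_le_add_left (Nat.add_le_add_left (Set.ncard_union_le _ _) _) _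
      _ ≤ 1 + ((q + 1) * q + (((q + 1) * q) * (q * q) + q * (q * (q * (q * q))))) := by
          rw [Set.ncard_singleton]
          exact Nat.add_le_add_left (Nat.add_le_add hA2 (Nat.add_le_add hA4 hA6)) 1
  -- lower bound: the union of S and lines meeting S
  set U : Set L := ⋃ m ∈ S, ⋃ p ∈ {x : P | I x m}, ({n | I p n} \ {m}) with hU
  have hULB : (q ^ 3 + 1) * ((q + 1) * q) ≤ U.ncard := by
    have hlb : ∀ m ∈ S, (q + 1) * q ≤ (⋃ p ∈ {x : P | I x m}, ({n | I p n} \ {m})).ncard := by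
      intro m _
      have hdisj : ∀ p ∈ {x : P | I x m}, ∀ p' ∈ {x : P | I x m}, p ≠ p' →
          ∀ x, x ∈ {n | I p n} \ {m} → x ∈ {n | I p' n} \ {m} → False := by
        intro p hp p' hp' hpp x hx hx'
        exact no4cycle hgirth hpp hx.2 hx.1 hx'.1 hp hp'
      have h2 := aux_lb {x : P | I x m} (fun p => {n | I p n} \ {m}) q
        (fun p hp => le_of_eq (lns_diff_ncard hlns hp).symm) hdisj
      rw [hpts m] at h2; exact h2
    have hdisj2 : ∀ m₁ ∈ S, ∀ m₂ ∈ S, m₁ ≠ m₂ → ∀ x,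
        x ∈ ⋃ p ∈ {x : P | I x m₁}, ({n | I p n} \ {m₁}) →
        x ∈ ⋃ p ∈ {x : P | I x m₂}, ({n | I p n} \ {m₂}) → False := by
      intro m₁ hm₁ m₂ hm₂ hm x hx₁ hx₂
      simp only [Set.mem_iUnion, Set.mem_diff, Set.mem_singleton_iff,
        Set.mem_setOf_eq, exists_prop] at hx₁ hx₂
      obtain ⟨p₁, hp₁m, hp₁x, _⟩ := hx₁
      obtain ⟨p₂, hp₂m, hp₂x, _⟩ := hx₂
      have hw : (IncidenceGraph I).dist (Sum.inr m₁) (Sum.inr m₂) ≤ 4 := by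
        have := SimpleGraph.dist_le
          (SimpleGraph.Walk.cons (adj_inr.mpr ⟨p₁, rfl, hp₁m⟩)
            (SimpleGraph.Walk.cons (adj_of_inc hp₁x)
              (SimpleGraph.Walk.cons (adj_inr.mpr ⟨p₂, rfl, hp₂x⟩)
                (SimpleGraph.Walk.cons (adj_of_inc hp₂m) SimpleGraph.Walk.nil))))
        simpa using this
      rw [hopp m₁ hm₁ m₂ hm₂ hm] at hw
      omega
    have h1 := aux_lb S (fun m => ⋃ p ∈ {x : P | I x m}, ({n | I p n} \ {m})) ((q + 1) * q)
      hlb hdisj2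
    rw [hcard] at h1; exact h1
  have hdisjSU : Disjoint S U := by
    rw [Set.disjoint_left]
    intro n hnS hnU
    simp only [hU, Set.mem_iUnion, Set.mem_diff, Set.mem_singleton_iff,
      Set.mem_setOf_eq, exists_prop] at hnU
    obtain ⟨m, hmS, p, hpm, hpn, hnm⟩ := hnU
    have hw : (IncidenceGraph I).dist (Sum.inr m) (Sum.inr n) ≤ 2 := by
      have := SimpleGraph.dist_le
        (SimpleGraph.Walk.cons (adj_inr.mpr ⟨p, rfl, hpm⟩)
          (SimpleGraph.Walk.cons (adj_of_inc hpn) SimpleGraph.Walk.nil))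
      simpa using this
    rw [hopp m hmS n hnS (Ne.symm hnm)] at hw
    omega
  have hSU : (q ^ 3 + 1) + (q ^ 3 + 1) * ((q + 1) * q) ≤ (S ∪ U).ncard := by
    rw [Set.ncard_union_eq hdisjSU (Set.toFinite _) (Set.toFinite _), hcard]
    exact Nat.add_le_add_left hULB _
  have hkey : (q ^ 3 + 1) + (q ^ 3 + 1) * ((q + 1) * q) =
      1 + ((q + 1) * q + (((q + 1) * q) * (q * q) + q * (q * (q * (q * q))))) := by ring
  have heq : S ∪ U = Set.univ := by
    apply Set.eq_of_subset_of_ncard_le (Set.subset_univ _) _ (Set.toFinite _)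
    omega
  have hl : l ∈ S ∪ U := heq ▸ Set.mem_univ l
  rcases hl with hl | hl
  · exact Or.inl hl
  · simp only [hU, Set.mem_iUnion, Set.mem_diff, Set.mem_singleton_iff,
      Set.mem_setOf_eq, exists_prop] at hl
    obtain ⟨m, hmS, p, hpm, hpl, hlm⟩ := hl
    exact Or.inr ⟨m, hmS, Ne.symm hlm, p, hpl, hpm⟩
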